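/- arXiv:1603.08560 — 5 statements merged into one kernel-verified Lean document; each statement's English description precedes it below -/
import Mathlib

section
/- Let n ≥ 3 and r an even integer with 0 ≤ r < n. Let A be an alternating n×n matrix written in block form with rows/columns partitioned as (1, n-2, 1): A = [[0, L, a],[-L^T, B, C],[-a, -C^T, 0]] with B an (n-2)×(n-2) alternating matrix. Set N = E_{1,n} - E_{n,1}. If rank(A + tN) ≤ r for all t ∈ K, then rank(B) ≤ r - 2. -/
open Matrix

private lemma det_alt_odd {K : Type*} [CommRing K] {n : ℕ} (hn : Odd n)
    (A : Matrix (Fin n) (Fin n) K) (h1 : Aᵀ = -A) (h2 : ∀ i, A i i = 0) :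
    A.det = 0 := by
  classical
  set G : Matrix (Fin n) (Fin n) (MvPolynomial (Fin n × Fin n) ℤ) :=
    Matrix.of fun i j => if i < j then MvPolynomial.X (i, j)
      else if j < i then - MvPolynomial.X (j, i) else 0 with hG
  have hGT : Gᵀ = -G := by
    apply Matrix.ext; intro i j
    rw [Matrix.transpose_apply, Matrix.neg_apply]
    rcases lt_trichotomy i j with h | h | h
    · rw [hG]; simp only [Matrix.of_apply, if_neg (asymm h), if_pos h]
    · subst h; rw [hG]; simp only [Matrix.of_apply, if_neg (lt_irrefl i), neg_zero]
    · rw [hG]; simp only [Matrix.of_apply, if_pos h, if_neg (asymm h), neg_neg]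
  have hdet : G.det = 0 := by
    have h1' : G.det = -G.det := by
      conv_lhs => rw [← Matrix.det_transpose, hGT, Matrix.det_neg, Fintype.card_fin, hn.neg_one_pow, neg_one_mul]
    have h2' : (2 : MvPolynomial (Fin n × Fin n) ℤ) * G.det = 0 := by linear_combination h1'
    have : (2 : MvPolynomial (Fin n × Fin n) ℤ) ≠ 0 := two_ne_zero
    exact (mul_eq_zero.mp h2').resolve_left this
  set φ : MvPolynomial (Fin n × Fin n) ℤ →+* K := MvPolynomial.eval₂Hom (Int.castRingHom K) (fun p => A p.1 p.2) with hφ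
  have hA : A = φ.mapMatrix G := by
    ext i j
    rcases lt_trichotomy i j with h | h | h
    · simp only [hG, Matrix.of_apply, if_pos h, RingHom.mapMatrix_apply, Matrix.map_apply, hφ]
      simp only [MvPolynomial.eval₂Hom_X']
    · subst h; simp [hG, lt_irrefl, h2, hφ]
    · have hA' : A i j = - A j i := by
        have := congrFun (congrFun h1 i) j
        simpa [Matrix.transpose_apply] using congrFun (congrFun h1 j) i
      simp [hG, h, h.not_gt, hφ, hA', MvPolynomial.eval₂Hom_X']
  rw [hA, ← RingHom.map_det, hdet, map_zero]

private lemma span_range_neg {K V : Type*} [Field K] [AddCommGroup V] [Module K V]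
    {ι : Type*} (v : ι → V) :
    Submodule.span K (Set.range fun i => -(v i)) = Submodule.span K (Set.range v) := by
  apply le_antisymm
  · rw [Submodule.span_le]
    rintro _ ⟨i, rfl⟩
    exact Submodule.neg_mem _ (Submodule.subset_span ⟨i, rfl⟩)
  · rw [Submodule.span_le]
    rintro _ ⟨i, rfl⟩
    have : v i = -(-(v i)) := by simp
    rw [this]
    exact Submodule.neg_mem _ (Submodule.subset_span ⟨i, rfl⟩)

private lemma rank_row_select {K : Type*} [Field K] {α β γ : Type*}
    [Fintype α] [Fintype β] [Fintype γ]
    (M : Matrix β γ K) (f : α → β) :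
    (M.submatrix f id).rank ≤ M.rank := by
  rw [Matrix.rank_eq_finrank_span_row, Matrix.rank_eq_finrank_span_row]
  apply Submodule.finrank_mono
  apply Submodule.span_mono
  rintro _ ⟨k, rfl⟩
  exact ⟨f k, rfl⟩

private lemma rank_col_select {K : Type*} [Field K] {α β γ : Type*}
    [Fintype α] [Fintype β] [Fintype γ]
    (M : Matrix β γ K) (g : α → γ) :
    (M.submatrix id g).rank ≤ M.rank := by
  rw [← Matrix.rank_transpose (M.submatrix id g), ← Matrix.rank_transpose M,
    Matrix.transpose_submatrix]
  exact rank_row_select Mᵀ g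

private lemma rank_submatrix_le' {K : Type*} [Field K] {α α' β γ : Type*}
    [Fintype α] [Fintype α'] [Fintype β] [Fintype γ]
    (M : Matrix β γ K) (f : α → β) (g : α' → γ) :
    (M.submatrix f g).rank ≤ M.rank := by
  have h1 : M.submatrix f g = (M.submatrix id g).submatrix f id := by
    rw [Matrix.submatrix_submatrix]; simp
  rw [h1]
  exact (rank_row_select _ f).trans (rank_col_select M g)

private lemma exists_principal {K : Type*} [Field K] {N : ℕ}
    (B : Matrix (Fin N) (Fin N) K) (hBT : Bᵀ = -B) :
    ∃ f : Fin B.rank → Fin N, Function.Injective f ∧ IsUnit (B.submatrix f f) := by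
  classical
  obtain ⟨s, hsub, hspan, hind⟩ := exists_linearIndependent K (Set.range B)
  have hsfin : s.Finite := (Set.finite_range B).subset hsub
  haveI : Fintype s := hsfin.fintype
  have hcard : Fintype.card s = B.rank := by
    rw [Matrix.rank_eq_finrank_span_row, show Set.range B.row = Set.range B from rfl, ← hspan, finrank_span_set_eq_card hind,
      Set.toFinset_card]
  let g : s → Fin N := fun v => (hsub v.2).choose
  have hg : ∀ v : s, B (g v) = v := fun v => (hsub v.2).choose_spec
  have hginj : Function.Injective g := by
    intro v w hvw
    apply Subtype.ext
    rw [← hg v, ← hg w, hvw]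
  let e : Fin B.rank ≃ s := (Fintype.equivFinOfCardEq hcard).symm
  set f : Fin B.rank → Fin N := fun k => g (e k) with hf
  refine ⟨f, hginj.comp e.injective, ?_⟩
  have hrange : Set.range (fun k => B (f k)) = s := by
    apply Set.eq_of_subset_of_subset
    · rintro _ ⟨k, rfl⟩
      show B (g (e k)) ∈ s
      rw [hg]
      exact (e k).2
    · intro v hv
      refine ⟨e.symm ⟨v, hv⟩, ?_⟩
      show B (g (e (e.symm ⟨v, hv⟩))) = v
      rw [hg, Equiv.apply_symm_apply]
  have hspan_row : Submodule.span K (Set.range (B.submatrix f id)) = Submodule.span K s := by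
    have : Set.range (B.submatrix f id) = s := hrange
    rw [this]
  have hrankR : (B.submatrix f id).rank = B.rank := by
    rw [Matrix.rank_eq_finrank_span_row]
    exact (congrArg (fun W : Submodule K (Fin N → K) => Module.finrank K W)
      (hspan_row.trans hspan)).trans (Matrix.rank_eq_finrank_span_row B).symm
  -- columns
  set π : (Fin N → K) →ₗ[K] (Fin B.rank → K) := LinearMap.funLeft K K f with hπ
  have hspanBT : Submodule.span K (Set.range Bᵀ) = Submodule.span K s := by
    have h1 : Set.range Bᵀ = Set.range (fun i => -(B i)) := by
      rw [hBT]; rfl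
    rw [h1]; exact (span_range_neg (K := K) (V := Fin N → K) B).trans hspan.symm
  have hcolsR : Submodule.span K (Set.range (B.submatrix f id)ᵀ)
      = Submodule.map π (Submodule.span K s) := by
    have h1 : (B.submatrix f id)ᵀ = fun j => π (Bᵀ j) := rfl
    have h2 : Set.range (fun j => π (Bᵀ j)) = π '' Set.range Bᵀ := by
      exact Set.range_comp' (⇑π) (Bᵀ : Fin N → Fin N → K)
    rw [h1, h2, Submodule.span_image, hspanBT]
  have hcolsP : Submodule.span K (Set.range (B.submatrix f f)ᵀ)
      = Submodule.map π (Submodule.span K s) := by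
    have h1 : (B.submatrix f f)ᵀ = fun j => π (Bᵀ (f j)) := rfl
    have h2 : Set.range (fun j => π (Bᵀ (f j))) = π '' Set.range (fun j => Bᵀ (f j)) := by
      rw [← Set.range_comp]; rfl
    have h3 : Submodule.span K (Set.range (fun j => Bᵀ (f j))) = Submodule.span K s := by
      have h4 : (fun j => Bᵀ (f j)) = fun j => -(B (f j)) := by
        rw [hBT]; rfl
      rw [h4, span_range_neg, hrange]
    rw [h1, h2, Submodule.span_image, h3]
  have hrankP : (B.submatrix f f).rank = B.rank := by
    calc (B.submatrix f f).rank
        = Module.finrank K (Submodule.span K (Set.range (B.submatrix f f)ᵀ)) :=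
          Matrix.rank_eq_finrank_span_cols _
      _ = Module.finrank K (Submodule.span K (Set.range (B.submatrix f id)ᵀ)) :=
          congrArg (fun W : Submodule K (Fin B.rank → K) => Module.finrank K W)
            (hcolsP.trans hcolsR.symm)
      _ = (B.submatrix f id).rank := (Matrix.rank_eq_finrank_span_cols _).symm
      _ = B.rank := hrankR
  -- invertibility
  have hsurj : Function.Surjective (B.submatrix f f).mulVecLin := by
    rw [← LinearMap.range_eq_top]
    apply Submodule.eq_top_of_finrank_eq
    rw [← Matrix.rank, hrankP, Module.finrank_fintype_fun_eq_card, Fintype.card_fin]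
  rw [← Matrix.mulVec_surjective_iff_isUnit]
  intro y
  obtain ⟨x, hx⟩ := hsurj y
  exact ⟨x, hx⟩

private lemma alt_rank_even {K : Type*} [Field K] {N : ℕ}
    (B : Matrix (Fin N) (Fin N) K) (hBT : Bᵀ = -B) (hBd : ∀ i, B i i = 0) :
    Even B.rank := by
  obtain ⟨f, hfinj, hunit⟩ := exists_principal B hBT
  by_contra hodd
  rw [Nat.not_even_iff_odd] at hodd
  have hT : (B.submatrix f f)ᵀ = -(B.submatrix f f) := by
    rw [Matrix.transpose_submatrix, hBT]
    rfl
  have hdet0 : (B.submatrix f f).det = 0 :=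
    det_alt_odd hodd _ hT (fun i => hBd (f i))
  exact (((Matrix.isUnit_iff_isUnit_det _).mp hunit).ne_zero) hdet0

theorem alternating_corner_lemma (K : Type*) [Field K] (n r : ℕ)
    (hn : 3 ≤ n) (hr : Even r) (hrn : r < n)
    (A : Matrix (Fin n) (Fin n) K)
    (hAlt : Aᵀ = -A ∧ ∀ i : Fin n, A i i = 0)
    (hrk : ∀ t : K,
      (A + t • (Matrix.single (⟨0, by omega⟩ : Fin n) (⟨n - 1, by omega⟩ : Fin n) (1 : K)
        - Matrix.single (⟨n - 1, by omega⟩ : Fin n) (⟨0, by omega⟩ : Fin n) (1 : K))).rank ≤ r) :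
    (A.submatrix
      (fun i : Fin (n - 2) => (⟨i.1 + 1, by have := i.2; omega⟩ : Fin n))
      (fun j : Fin (n - 2) => (⟨j.1 + 1, by have := j.2; omega⟩ : Fin n))).rank ≤ r - 2 := by
  classical
  obtain ⟨hAT, hdiag⟩ := hAlt
  have hANeg : ∀ i j, A i j = - A j i := fun i j => congrFun (congrFun hAT j) i
  have hz' : 0 < n := by omega
  have hw' : n - 1 < n := by omega
  set z : Fin n := ⟨0, hz'⟩ with hz
  set w : Fin n := ⟨n - 1, hw'⟩ with hw
  set Nm : Matrix (Fin n) (Fin n) K :=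
    Matrix.single z w 1 - Matrix.single w z 1 with hNm
  have hlt : ∀ i : Fin (n - 2), i.1 + 1 < n := fun i => by have := i.2; omega
  set emb : Fin (n - 2) → Fin n := fun i => ⟨i.1 + 1, hlt i⟩ with hemb
  set B := A.submatrix emb emb with hBdef
  have hBT : Bᵀ = -B := by
    apply Matrix.ext; intro i j
    show A (emb j) (emb i) = -(A (emb i) (emb j))
    exact hANeg _ _
  have hBd : ∀ i, B i i = 0 := fun i => hdiag (emb i)
  have hEvenB := alt_rank_even B hBT hBd
  set m := B.rank with hm
  obtain ⟨f, hfinj, hPunit⟩ := exists_principal B hBT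
  set P := B.submatrix f f with hP
  have hdP : P.det ≠ 0 := ((Matrix.isUnit_iff_isUnit_det _).mp hPunit).ne_zero
  have hzw : z ≠ w := by
    simp only [hz, hw, Fin.ext_iff, ne_eq]
    omega
  have hembz : ∀ j, emb j ≠ z := fun j => by
    simp only [hemb, hz, Fin.ext_iff, ne_eq]
    omega
  have hembw : ∀ j, emb j ≠ w := fun j => by
    have := j.2
    simp only [hemb, hw, Fin.ext_iff, ne_eq]
    omega
  have hN1 : ∀ j j', Nm (emb j) (emb j') = 0 := fun j j' => by
    simp [hNm, Matrix.single, (hembz j).symm, (hembw j).symm,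
      (hembz j').symm, (hembw j').symm]
  have hN2 : ∀ j, Nm (emb j) w = 0 := fun j => by
    simp [hNm, Matrix.single, (hembz j).symm, (hembw j).symm, hzw.symm]
  have hN3 : ∀ j, Nm z (emb j) = 0 := fun j => by
    simp [hNm, Matrix.single, (hembz j).symm, (hembw j).symm, hzw]
  have hN4 : Nm z w = 1 := by
    simp [hNm, Matrix.single, hzw, hzw.symm]
  set ρ : (Fin m ⊕ Unit) → Fin n := Sum.elim (fun k => emb (f k)) (fun _ => z) with hρ
  set γm : (Fin m ⊕ Unit) → Fin n := Sum.elim (fun k => emb (f k)) (fun _ => w) with hγ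
  set Q : K → Matrix (Fin m ⊕ Unit) (Fin m ⊕ Unit) K :=
    fun t => (A + t • Nm).submatrix ρ γm with hQ
  set u : (Fin m ⊕ Unit) → K := Pi.single (Sum.inr ()) 1 with hu
  have hQeq : ∀ t, Q t = Matrix.updateRow (Q 0) (Sum.inr ()) (Q 0 (Sum.inr ()) + t • u) := by
    intro t
    apply Matrix.ext
    rintro (k | _) c
    · rw [Matrix.updateRow_ne (by simp : (Sum.inl k : Fin m ⊕ Unit) ≠ Sum.inr ())]
      rcases c with k' | _
      · simp [hQ, hρ, hγ, hN1]
      · simp [hQ, hρ, hγ, hN2]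
    · rw [Matrix.updateRow_self]
      rcases c with k' | _
      · simp [hQ, hρ, hγ, hN3, hu]
      · simp [hQ, hρ, hγ, hN4, hu]
  have hupd : Matrix.updateRow (Q 0) (Sum.inr ()) u
      = Matrix.fromBlocks P (Matrix.of fun k (_ : Unit) => A (emb (f k)) w) 0 1 := by
    apply Matrix.ext
    rintro (k | _) c
    · rw [Matrix.updateRow_ne (by simp : (Sum.inl k : Fin m ⊕ Unit) ≠ Sum.inr ())]
      rcases c with k' | _
      · simp [hQ, hρ, hγ, hN1, hP, hBdef]
      · simp [hQ, hρ, hγ, hN2]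
    · rw [Matrix.updateRow_self]
      rcases c with k' | _
      · simp [hu]
      · simp [hu]
  have hdetlin : ∀ t, (Q t).det = (Q 0).det + t * P.det := by
    intro t
    rw [hQeq t, Matrix.det_updateRow_add, Matrix.det_updateRow_smul,
      Matrix.updateRow_eq_self, hupd, Matrix.det_fromBlocks_zero₂₁, Matrix.det_one, mul_one]
  set t₀ := (1 - (Q 0).det) / P.det with ht₀
  have hdet1 : (Q t₀).det = 1 := by
    rw [hdetlin, ht₀, div_mul_cancel₀ _ hdP]
    ring
  have hQunit : IsUnit (Q t₀) :=
    (Matrix.isUnit_iff_isUnit_det _).mpr (by rw [hdet1]; exact isUnit_one)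
  have hrankQ : (Q t₀).rank = m + 1 := by
    rw [Matrix.rank_of_isUnit _ hQunit]
    simp
  have hle : m + 1 ≤ r := by
    have h1 : (Q t₀).rank ≤ (A + t₀ • Nm).rank := rank_submatrix_le' _ ρ γm
    have h2 := hrk t₀
    rw [hrankQ] at h1
    exact h1.trans h2
  obtain ⟨b1, hb1⟩ := hEvenB
  obtain ⟨b2, hb2⟩ := hr
  have hfinal : m + 2 ≤ r := by omega
  show B.rank ≤ r - 2
  omega
end

section
/- Extraction corollary (alternating case): let M be an alternating n×n matrix, i ≠ j indices in {1,...,n}, and r an even integer with 0 ≤ r < n, n ≥ 3. If rank(M + t(E_{i,j} - E_{j,i})) ≤ r for all t ∈ K, then the submatrix of M obtained by deleting the i-th and j-th rows and columns has rank at most r - 2. -/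
open Module LinearMap Matrix

universe u v

section Aux
variable {K : Type u} [Field K]


lemma even_finrank_range_of_alt (K : Type u) [Field K] :
    ∀ (k : ℕ) (V : Type v) [AddCommGroup V] [Module K V] [FiniteDimensional K V]
      (B : V →ₗ[K] V →ₗ[K] K), (∀ x, B x x = 0) →
      Module.finrank K (LinearMap.range B) = k → Even k := by
  intro k
  induction k using Nat.strong_induction_on with
  | _ k ih =>
    intro V _ _ _ B halt hk
    have skew : ∀ x y, B y x = - B x y := by
      intro x y
      have h := halt (x + y)
      simp only [map_add, LinearMap.add_apply, halt] at h
      linear_combination h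
    by_cases hB : B = 0
    · have hk0 : k = 0 := by
        rw [← hk, hB]
        simp
      rw [hk0]; exact Even.zero
    · -- find u, v with B u v = 1
      obtain ⟨u, hu⟩ : ∃ u, B u ≠ 0 := by
        by_contra h
        push_neg at h
        exact hB (by ext x y; simp [h])
      obtain ⟨v₀, hv₀⟩ : ∃ v, B u v ≠ 0 := by
        by_contra h
        push_neg at h
        exact hu (by ext y; simp [h])
      set v : V := (B u v₀)⁻¹ • v₀ with hv
      have huv : B u v = 1 := by
        simp [hv, _root_.map_smul, inv_mul_cancel₀ hv₀]
      have hvu : B v u = -1 := by rw [skew u v, huv]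
      set W : Submodule K V := LinearMap.ker (B u) ⊓ LinearMap.ker (B v) with hW
      have memW : ∀ z : V, z ∈ W ↔ B u z = 0 ∧ B v z = 0 := by
        intro z; simp [hW, Submodule.mem_inf, LinearMap.mem_ker]
      -- decomposition
      have hdec : ∀ z : V, z - (B u z) • v + (B v z) • u ∈ W := by
        intro z
        rw [memW]
        constructor
        · simp [map_add, map_sub, _root_.map_smul, huv, halt]
        · simp [map_add, map_sub, _root_.map_smul, hvu, halt]
      set B' : W →ₗ[K] W →ₗ[K] K := B.domRestrict₁₂ W W with hB'
      have halt' : ∀ x : W, B' x x = 0 := fun x => halt x.1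
      -- kernels
      have hkerle : LinearMap.ker B ≤ W := by
        intro y hy
        rw [LinearMap.mem_ker] at hy
        rw [memW]
        constructor
        · rw [skew, hy]; simp
        · rw [skew, hy]; simp
      have hker' : LinearMap.ker B' = Submodule.comap W.subtype (LinearMap.ker B) := by
        ext y
        simp only [LinearMap.mem_ker, Submodule.mem_comap, Submodule.coe_subtype]
        constructor
        · intro h
          ext z
          have hz := hdec z
          have h1 : B (y : V) ((z - (B u z) • v + (B v z) • u : V)) = 0 := by
            have := congrFun (congrArg (fun (f : W →ₗ[K] K) => (f : W → K)) h) ⟨_, hz⟩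
            simpa [hB', LinearMap.domRestrict₁₂_apply] using this
          have hyu : B (y : V) u = 0 := by
            rw [skew]; have := ((memW y).1 y.2).1; rw [this]; simp
          have hyv : B (y : V) v = 0 := by
            rw [skew]; have := ((memW y).1 y.2).2; rw [this]; simp
          have : B (y : V) z = 0 := by
            have hexp : B (y:V) (z - (B u z) • v + (B v z) • u)
                = B (y:V) z - (B u z) * B (y:V) v + (B v z) * B (y:V) u := by
              simp [map_add, map_sub, _root_.map_smul, smul_eq_mul]
            rw [hexp, hyu, hyv] at h1
            simpa using h1
          simpa using this
        · intro h
          ext z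
          simp [hB', LinearMap.domRestrict₁₂_apply, h]
      have hkerfr : finrank K (LinearMap.ker B') = finrank K (LinearMap.ker B) := by
        rw [hker']
        exact LinearEquiv.finrank_eq (Submodule.comapSubtypeEquivOfLe hkerle)
      -- finrank W = finrank V - 2
      have hWfr : finrank K W + 2 = finrank K V := by
        set g : V →ₗ[K] K × K := (B u).prod (B v) with hg
        have hkerg : LinearMap.ker g = W := by
          ext z
          simp [hg, LinearMap.mem_ker, LinearMap.prod_apply, Prod.ext_iff, memW]
        have hrangeg : LinearMap.range g = ⊤ := by
          rw [eq_top_iff]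
          intro p _
          refine ⟨p.1 • v - p.2 • u, ?_⟩
          simp [hg, LinearMap.prod_apply, map_sub, _root_.map_smul, huv, hvu, halt,
            Prod.ext_iff, smul_eq_mul]
        have := LinearMap.finrank_range_add_finrank_ker g
        rw [hkerg, hrangeg] at this
        simp only [finrank_top] at this
        have h2 : finrank K (K × K) = 2 := by
          simp [Module.finrank_prod]
        omega
      have hrnB := LinearMap.finrank_range_add_finrank_ker B
      have hrnB' := LinearMap.finrank_range_add_finrank_ker B'
      set k' := finrank K (LinearMap.range B') with hk'
      have hkk' : k = k' + 2 := by omega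
      have hev' : Even k' := ih k' (by omega) W B' halt' rfl
      rw [hkk']
      exact hev'.add (even_iff_two_dvd.mpr ⟨1, rfl⟩)

/-- dot product as a bilinear map -/
noncomputable def dpL (K : Type*) [Field K] (m : Type v) [Fintype m] [DecidableEq m] :
    (m → K) →ₗ[K] ((m → K) →ₗ[K] K) :=
  LinearMap.mk₂ K (fun v w => v ⬝ᵥ w)
    (fun v v' w => add_dotProduct v v' w)
    (fun c v w => smul_dotProduct c v w)
    (fun v w w' => dotProduct_add v w w')
    (fun c v w => dotProduct_smul c v w)

lemma dpL_inj (m : Type v) [Fintype m] [DecidableEq m] : Function.Injective (dpL K m) := by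
  intro v w h
  funext a
  have := congrFun (congrArg (fun (f : (m → K) →ₗ[K] K) => (f : (m → K) → K)) h)
    (Pi.single a 1)
  simpa [dpL, LinearMap.mk₂_apply, dotProduct_single] using this

lemma alt_bilin_self {m : Type v} [Fintype m] [DecidableEq m] (A : Matrix (m) (m) K)
    (h1 : Aᵀ = -A) (h2 : ∀ i, A i i = 0) (x : m → K) :
    (A *ᵥ x) ⬝ᵥ x = 0 := by
  have hsk : ∀ a b, A b a = - A a b := by
    intro a b
    have := congrFun (congrFun h1 a) b
    simpa [Matrix.transpose_apply, Matrix.neg_apply] using this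
  classical
  have : (A *ᵥ x) ⬝ᵥ x = ∑ p : m × m, A p.1 p.2 * x p.2 * x p.1 := by
    simp only [dotProduct, Matrix.mulVec, dotProduct, Finset.sum_mul]
    rw [← Finset.sum_product']
    rfl
  rw [this]
  apply Finset.sum_ninvolution (fun p => (p.2, p.1))
  · intro p
    rcases eq_or_ne p.1 p.2 with h | h
    · simp [← h, h2 p.1]
    · have := hsk p.1 p.2
      ring_nf
      rw [this]
      ring
  · intro p hp
    intro hc
    apply hp
    have : p.2 = p.1 := congrArg Prod.fst hc
    rw [this, h2]
    ring
  · intro a; exact Finset.mem_univ _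
  · intro a; rfl

lemma even_rank_of_alt {m : Type v} [Fintype m] [DecidableEq m] (A : Matrix (m) (m) K)
    (h1 : Aᵀ = -A) (h2 : ∀ i, A i i = 0) : Even A.rank := by
  classical
  set B : (m → K) →ₗ[K] ((m → K) →ₗ[K] K) := (dpL K m).comp A.mulVecLin with hB
  have halt : ∀ x, B x x = 0 := by
    intro x
    have : B x x = (A *ᵥ x) ⬝ᵥ x := by
      simp [hB, dpL, LinearMap.mk₂_apply, Matrix.mulVecLin_apply]
    rw [this]
    exact alt_bilin_self A h1 h2 x
  have hrange : LinearMap.range B = (LinearMap.range A.mulVecLin).map (dpL K m) := by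
    rw [hB, LinearMap.range_comp]
  have hfr : Module.finrank K (LinearMap.range B) = A.rank := by
    rw [hrange, Matrix.rank]
    exact (LinearEquiv.finrank_eq
      (Submodule.equivMapOfInjective _ (dpL_inj m) (LinearMap.range A.mulVecLin))).symm
  exact even_finrank_range_of_alt K A.rank (m → K) B halt hfr

end Aux


theorem extraction_alternating (K : Type*) [Field K] (n r : ℕ)
    (hn : 3 ≤ n) (hr : Even r) (hrn : r < n)
    (M : Matrix (Fin n) (Fin n) K)
    (hAlt : Mᵀ = -M ∧ ∀ i : Fin n, M i i = 0)
    (i j : Fin n) (hij : i ≠ j)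
    (hrk : ∀ t : K,
      (M + t • (Matrix.single i j (1 : K) - Matrix.single j i (1 : K))).rank ≤ r) :
    (M.submatrix
      (fun k : {k : Fin n // k ≠ i ∧ k ≠ j} => k.1)
      (fun k : {k : Fin n // k ≠ i ∧ k ≠ j} => k.1)).rank ≤ r - 2 := by
  classical
  obtain ⟨hT, hD⟩ := hAlt
  by_contra hcon
  push_neg at hcon
  set E : Matrix (Fin n) (Fin n) K :=
    Matrix.single i j (1 : K) - Matrix.single j i (1 : K) with hE
  set N := M.submatrix
      (fun k : {k : Fin n // k ≠ i ∧ k ≠ j} => k.1)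
      (fun k : {k : Fin n // k ≠ i ∧ k ≠ j} => k.1) with hN
  -- N is alternating
  have hNT : Nᵀ = -N := by
    ext k l
    have := congrFun (congrFun hT k.1) l.1
    simpa [hN] using this
  have hND : ∀ k, N k k = 0 := fun k => hD k.1
  have hNeven : Even N.rank := even_rank_of_alt N hNT hND
  -- rank bounds from hypothesis
  have hrM : M.rank ≤ r := by simpa using hrk 0
  have hrME : (M + E).rank ≤ r := by
    have := hrk 1
    rwa [one_smul] at this
  -- the submodule Z of vectors vanishing at i and j
  set Z : Submodule K (Fin n → K) :=
    LinearMap.ker (LinearMap.proj i) ⊓ LinearMap.ker (LinearMap.proj j) with hZ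
  have memZ : ∀ z : Fin n → K, z ∈ Z ↔ z i = 0 ∧ z j = 0 := by
    intro z
    simp [hZ, Submodule.mem_inf, LinearMap.mem_ker, LinearMap.proj_apply]
  set π : (Fin n → K) →ₗ[K] ({k : Fin n // k ≠ i ∧ k ≠ j} → K) :=
    LinearMap.funLeft K K (fun k : {k : Fin n // k ≠ i ∧ k ≠ j} => k.1) with hπ
  set L : Submodule K (Fin n → K) := Z.map M.mulVecLin with hL
  -- summation helper
  have hsum : ∀ (c z : Fin n → K), z i = 0 → z j = 0 →
      ∑ l : {k : Fin n // k ≠ i ∧ k ≠ j}, c l.1 * z l.1 = ∑ l : Fin n, c l * z l := by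
    intro c z hzi hzj
    have h1 : ∑ l ∈ Finset.univ.filter (fun l : Fin n => l ≠ i ∧ l ≠ j), c l * z l
        = ∑ l : Fin n, c l * z l := by
      apply Finset.sum_filter_of_ne
      intro l _ hl
      constructor
      · rintro rfl; exact hl (by rw [hzi, mul_zero])
      · rintro rfl; exact hl (by rw [hzj, mul_zero])
    rw [← h1]
    have h2 : ∀ x : Fin n, x ∈ Finset.univ.filter (fun l : Fin n => l ≠ i ∧ l ≠ j)
        ↔ (x ≠ i ∧ x ≠ j) := by
      intro x
      simp only [Finset.mem_filter, Finset.mem_univ, true_and]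
    exact (Finset.sum_subtype _ h2 (fun l => c l * z l)).symm
  -- range of N.mulVecLin equals π(L)
  have hrangeN : LinearMap.range N.mulVecLin = L.map π := by
    apply le_antisymm
    · rintro y ⟨x, rfl⟩
      set xt : Fin n → K := fun k => if h : k ≠ i ∧ k ≠ j then x ⟨k, h⟩ else 0 with hxt
      have hxti : xt i = 0 := by simp [hxt]
      have hxtj : xt j = 0 := by simp [hxt]
      have hxtZ : xt ∈ Z := (memZ xt).2 ⟨hxti, hxtj⟩
      refine ⟨M.mulVecLin xt, ⟨xt, hxtZ, rfl⟩, ?_⟩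
      funext k
      have hx : ∀ l : {k : Fin n // k ≠ i ∧ k ≠ j}, x l = xt l.1 := by
        intro l
        simp [hxt, l.2]
      show (M *ᵥ xt) k.1 = (N *ᵥ x) k
      calc (M *ᵥ xt) k.1 = ∑ l : Fin n, M k.1 l * xt l := by
            simp [Matrix.mulVec, dotProduct]
        _ = ∑ l : {k : Fin n // k ≠ i ∧ k ≠ j}, M k.1 l.1 * xt l.1 :=
            (hsum (fun l => M k.1 l) xt hxti hxtj).symm
        _ = (N *ᵥ x) k := by
            simp only [Matrix.mulVec, dotProduct, hN, Matrix.submatrix_apply]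
            exact Finset.sum_congr rfl (fun l _ => by rw [hx l])
    · rintro y ⟨w, ⟨z, hz, rfl⟩, rfl⟩
      obtain ⟨hzi, hzj⟩ := (memZ z).1 hz
      refine ⟨fun k : {k : Fin n // k ≠ i ∧ k ≠ j} => z k.1, ?_⟩
      funext k
      show (N *ᵥ fun k => z k.1) k = (M *ᵥ z) k.1
      calc (N *ᵥ fun k => z k.1) k
          = ∑ l : {k : Fin n // k ≠ i ∧ k ≠ j}, M k.1 l.1 * z l.1 := by
            simp [Matrix.mulVec, dotProduct, hN, Matrix.submatrix_apply]
        _ = ∑ l : Fin n, M k.1 l * z l := hsum (fun l => M k.1 l) z hzi hzj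
        _ = (M *ᵥ z) k.1 := by simp [Matrix.mulVec, dotProduct]
  have hrN : N.rank = finrank K (L.map π) := by
    rw [Matrix.rank, hrangeN]
  -- rank chain
  have hLle : L ≤ LinearMap.range M.mulVecLin := by
    rintro y ⟨z, _, rfl⟩
    exact LinearMap.mem_range_self _ _
  have h1 : finrank K (L.map π) ≤ finrank K L := Submodule.finrank_map_le π L
  have h2 : finrank K L ≤ M.rank := by
    rw [Matrix.rank]
    exact Submodule.finrank_mono hLle
  -- deduce N.rank = r
  obtain ⟨a, ha⟩ := hr
  obtain ⟨b, hb⟩ := hNeven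
  have hNr : N.rank = r := by omega
  have hLfr : finrank K L = r := le_antisymm (h2.trans hrM) (by omega)
  -- L equals the range of M
  have hLrange : L = LinearMap.range M.mulVecLin :=
    Submodule.eq_of_le_of_finrank_le hLle (by rw [← Matrix.rank, hLfr]; exact hrM)
  -- E kills Z
  have hEZ : ∀ z : Fin n → K, z i = 0 → z j = 0 → E *ᵥ z = 0 := by
    intro z hzi hzj
    rw [hE, Matrix.sub_mulVec, Matrix.single_mulVec, Matrix.single_mulVec,
      hzi, hzj]
    funext k
    simp [Function.update]
  have hLE : L = Z.map (M + E).mulVecLin := by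
    ext y
    constructor
    · rintro ⟨z, hz, rfl⟩
      obtain ⟨hzi, hzj⟩ := (memZ z).1 hz
      refine ⟨z, hz, ?_⟩
      simp [Matrix.mulVecLin_apply, Matrix.add_mulVec, hEZ z hzi hzj]
    · rintro ⟨z, hz, rfl⟩
      obtain ⟨hzi, hzj⟩ := (memZ z).1 hz
      refine ⟨z, hz, ?_⟩
      simp [Matrix.mulVecLin_apply, Matrix.add_mulVec, hEZ z hzi hzj]
  have hLrange' : L = LinearMap.range (M + E).mulVecLin := by
    rw [hLE]
    refine Submodule.eq_of_le_of_finrank_le ?_ ?_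
    · rintro y ⟨z, _, rfl⟩
      exact LinearMap.mem_range_self _ _
    · rw [← Matrix.rank, ← hLE, hLfr]
      exact hrME
  -- the single basis vector e_i lies in L
  have hMj : M.mulVecLin (Pi.single j 1) ∈ L := by
    rw [hLrange]; exact LinearMap.mem_range_self _ _
  have hMjE : (M + E).mulVecLin (Pi.single j 1) ∈ L := by
    rw [hLrange']; exact LinearMap.mem_range_self _ _
  have hEj : E *ᵥ (Pi.single j 1) = Pi.single i 1 := by
    rw [hE, Matrix.sub_mulVec, Matrix.single_mulVec, Matrix.single_mulVec]
    funext k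
    rcases eq_or_ne k i with rfl | hk
    · simp [Function.update_apply, Pi.single_apply, hij, hij.symm]
    · rcases eq_or_ne k j with rfl | hk2
      · simp [Function.update_apply, Pi.single_apply, hij, hij.symm, hk]
      · simp [Function.update_apply, Pi.single_apply, hk, hk2]
  have hei : (Pi.single i 1 : Fin n → K) ∈ L := by
    have heq : (Pi.single i 1 : Fin n → K)
        = (M + E).mulVecLin (Pi.single j 1) - M.mulVecLin (Pi.single j 1) := by
      simp [Matrix.mulVecLin_apply, Matrix.add_mulVec, hEj]
    rw [heq]
    exact Submodule.sub_mem L hMjE hMj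
  -- but π kills e_i, contradicting injectivity of π on L
  have hπei : π (Pi.single i 1 : Fin n → K) = 0 := by
    funext k
    simp [hπ, LinearMap.funLeft_apply, Pi.single_eq_of_ne k.2.1]
  set f' := π.domRestrict L with hf'
  have hrangef' : LinearMap.range f' = L.map π := LinearMap.range_domRestrict L π
  have hrk' := LinearMap.finrank_range_add_finrank_ker f'
  rw [hrangef'] at hrk'
  have hker0 : LinearMap.ker f' = ⊥ := Submodule.finrank_eq_zero.mp (by omega)
  have hmem : (⟨Pi.single i 1, hei⟩ : L) ∈ LinearMap.ker f' := by
    rw [LinearMap.mem_ker, hf', LinearMap.domRestrict_apply]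
    exact hπei
  rw [hker0, Submodule.mem_bot] at hmem
  have hzero : (Pi.single i 1 : Fin n → K) = 0 := congrArg Subtype.val hmem
  have := congrFun hzero i
  simp at this
end

section
/- Extraction corollary (symmetric case): let K be a field with more than 2 elements, M a symmetric n×n matrix, i ≠ j in {1,...,n}, and 0 ≤ r < n with n ≥ 3. If rank(M + t(E_{i,j} + E_{j,i})) ≤ r for all t ∈ K, then the submatrix obtained from M by deleting the i-th and j-th rows and columns has rank at most r - 2. -/
open Matrix

section Aux

variable {K : Type*} [Field K]

/-- From a family spanning a space of finrank at least `k`, extract `k` linearly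
independent members. -/
lemma aux_exists_li_subfamily {V ι : Type*} [AddCommGroup V] [Module K V]
    [FiniteDimensional K V] (v : ι → V) (k : ℕ)
    (hk : k ≤ Module.finrank K (Submodule.span K (Set.range v))) :
    ∃ g : Fin k → ι, LinearIndependent K (v ∘ g) := by
  obtain ⟨b, hbsub, hbspan, hbli⟩ := exists_linearIndependent K (Set.range v)
  have hbfin : b.Finite := hbli.setFinite
  haveI := hbfin.fintype
  have hcard : Module.finrank K (Submodule.span K b) = b.toFinset.card :=
    finrank_span_set_eq_card hbli
  have hkb : k ≤ Fintype.card b := by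
    rw [← Set.toFinset_card, ← hcard, hbspan]
    exact hk
  let emb : Fin k → b := fun l => (Fintype.equivFin b).symm ⟨l.1, lt_of_lt_of_le l.2 hkb⟩
  have hembinj : Function.Injective emb := by
    intro x y hxy
    simpa [Fin.ext_iff] using (Fintype.equivFin b).symm.injective hxy
  have hmem : ∀ l : Fin k, ((emb l : V) ∈ Set.range v) := fun l => hbsub (emb l).2
  refine ⟨fun l => (hmem l).choose, ?_⟩
  have hvg : (v ∘ fun l => (hmem l).choose) = (fun x : b => (x : V)) ∘ emb :=
    funext fun l => (hmem l).choose_spec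
  rw [hvg]
  exact hbli.comp emb hembinj

lemma aux_rank_submatrix_row_le {m n m' : Type*} [Fintype m] [Fintype n] [Fintype m']
    (A : Matrix m n K) (f : m' → m) :
    (A.submatrix f id).rank ≤ A.rank := by
  rw [rank_eq_finrank_span_row, rank_eq_finrank_span_row]
  apply Submodule.finrank_mono
  apply Submodule.span_mono
  rintro x ⟨a, rfl⟩
  exact ⟨f a, rfl⟩

lemma aux_rank_submatrix_le {m n m' n' : Type*} [Fintype m] [Fintype n] [Fintype m'] [Fintype n']
    (A : Matrix m n K) (f : m' → m) (g : n' → n) :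
    (A.submatrix f g).rank ≤ A.rank := by
  have hcol : (A.submatrix id g).rank ≤ A.rank := by
    calc (A.submatrix id g).rank = ((A.submatrix id g)ᵀ).rank := (rank_transpose _).symm
      _ = (Aᵀ.submatrix g id).rank := by rw [transpose_submatrix]
      _ ≤ Aᵀ.rank := aux_rank_submatrix_row_le _ _
      _ = A.rank := rank_transpose A
  have hsub : A.submatrix f g = (A.submatrix id g).submatrix f id := by
    rw [submatrix_submatrix]
    rfl
  rw [hsub]
  exact le_trans (aux_rank_submatrix_row_le _ _) hcol

lemma aux_exists_submatrix_det_ne_zero {m n : Type*} [Fintype m] [Fintype n] [DecidableEq m]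
    [DecidableEq n] (A : Matrix m n K) {k : ℕ} (hk : k ≤ A.rank) :
    ∃ (f : Fin k → m) (g : Fin k → n), (A.submatrix f g).det ≠ 0 := by
  have h1 : k ≤ Module.finrank K (Submodule.span K (Set.range Aᵀ)) := by
    exact le_of_le_of_eq hk (rank_eq_finrank_span_cols A)
  obtain ⟨g, hg⟩ := aux_exists_li_subfamily Aᵀ k h1
  have hA1 : k ≤ (A.submatrix id g).rank := by
    have hli : LinearIndependent K (fun l : Fin k => ((A.submatrix id g)ᵀ) l) := hg
    have h2 : ((A.submatrix id g)ᵀ).rank = k := by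
      have := hli.rank_matrix; simp only [Fintype.card_fin] at this; exact this
    rw [← rank_transpose, h2]
  have h3 : k ≤ Module.finrank K (Submodule.span K (Set.range (A.submatrix id g))) := by
    exact le_of_le_of_eq hA1 (rank_eq_finrank_span_row _)
  obtain ⟨f, hf⟩ := aux_exists_li_subfamily (A.submatrix id g) k h3
  refine ⟨f, g, ?_⟩
  have hrows : LinearIndependent K (fun l : Fin k => (A.submatrix f g) l) := hf
  have hunit : IsUnit (A.submatrix f g) := linearIndependent_rows_iff_isUnit.mp hrows
  exact isUnit_iff_ne_zero.mp ((isUnit_iff_isUnit_det _).mp hunit)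

/-- Determinant expansion for a matrix modified in two columns. -/
lemma aux_det_update_two {ι : Type*} [Fintype ι] [DecidableEq ι] (X : Matrix ι ι K)
    {p q : ι} (hpq : p ≠ q) (t : K) (dp dq : ι → K) :
    ((X.updateCol p ((fun r => X r p) + t • dq)).updateCol q
        ((fun r => X r q) + t • dp)).det
      = X.det + t * (X.updateCol q dp).det
        + (t * (X.updateCol p dq).det
          + t * (t * ((X.updateCol p dq).updateCol q dp).det)) := by
  have hswap2 : ∀ (u v : ι → K), (X.updateCol q u).updateCol p v
      = (X.updateCol p v).updateCol q u := by
    intro u v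
    ext r c
    simp only [Matrix.updateCol_apply]
    split_ifs with h1 h2 <;> simp_all
  have expand : ∀ (Y : Matrix ι ι K) (s : ι) (w : ι → K),
      (Y.updateCol s ((fun r => Y r s) + t • w)).det
        = Y.det + t * (Y.updateCol s w).det := by
    intro Y s w
    rw [det_updateCol_add, det_updateCol_smul, updateCol_eq_self]
  have h1 : (fun r => X r q)
      = fun r => (X.updateCol p ((fun r => X r p) + t • dq)) r q := by
    funext r
    rw [Matrix.updateCol_ne hpq.symm]
  have h2 : (fun r => X r p) = fun r => (X.updateCol q dp) r p := by
    funext r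
    rw [Matrix.updateCol_ne hpq]
  calc ((X.updateCol p ((fun r => X r p) + t • dq)).updateCol q
        ((fun r => X r q) + t • dp)).det
      = (X.updateCol p ((fun r => X r p) + t • dq)).det
        + t * ((X.updateCol p ((fun r => X r p) + t • dq)).updateCol q dp).det := by
        rw [h1]; exact expand _ q dp
    _ = (X.det + t * (X.updateCol p dq).det)
        + t * ((X.updateCol q dp).updateCol p ((fun r => X r p) + t • dq)).det := by
        rw [expand X p dq, ← hswap2]
    _ = (X.det + t * (X.updateCol p dq).det)
        + t * ((X.updateCol q dp).det + t * ((X.updateCol q dp).updateCol p dq).det) := by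
        rw [h2, expand (X.updateCol q dp) p dq]
    _ = X.det + t * (X.updateCol q dp).det
        + (t * (X.updateCol p dq).det
          + t * (t * ((X.updateCol p dq).updateCol q dp).det)) := by
        rw [hswap2]; ring

end Aux

theorem extraction_symmetric (K : Type*) [Field K] (hK : 2 < Cardinal.mk K)
    (n r : ℕ) (hn : 3 ≤ n) (hrn : r < n)
    (M : Matrix (Fin n) (Fin n) K) (hSym : Mᵀ = M)
    (i j : Fin n) (hij : i ≠ j)
    (hrk : ∀ t : K,
      (M + t • (Matrix.single i j (1 : K) + Matrix.single j i (1 : K))).rank ≤ r) :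
    (M.submatrix
      (fun k : {k : Fin n // k ≠ i ∧ k ≠ j} => k.1)
      (fun k : {k : Fin n // k ≠ i ∧ k ≠ j} => k.1)).rank ≤ r - 2 := by
  classical
  by_contra hcon
  push_neg at hcon
  set k := r - 2 + 1 with hkdef
  have hkN : k ≤ (M.submatrix
      (fun k : {k : Fin n // k ≠ i ∧ k ≠ j} => k.1)
      (fun k : {k : Fin n // k ≠ i ∧ k ≠ j} => k.1)).rank := hcon
  obtain ⟨f, g, hdet⟩ := aux_exists_submatrix_det_ne_zero _ hkN
  -- a third field element
  obtain ⟨u, hu0, hu1⟩ : ∃ u : K, u ≠ 0 ∧ u ≠ 1 := by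
    by_contra h
    push_neg at h
    have hsub : (Set.univ : Set K) ⊆ {0, 1} := by
      intro x _
      by_cases hx : x = 0
      · exact Or.inl hx
      · exact Or.inr (h x hx)
    have h2 : Cardinal.mk K ≤ 2 := by
      calc Cardinal.mk K = Cardinal.mk (Set.univ : Set K) := Cardinal.mk_univ.symm
        _ ≤ Cardinal.mk ({0, 1} : Set K) := Cardinal.mk_le_mk_of_subset hsub
        _ ≤ Cardinal.mk ({1} : Set K) + 1 := Cardinal.mk_insert_le
        _ = 2 := by rw [Cardinal.mk_singleton]; exact one_add_one_eq_two
    exact absurd hK (not_lt.mpr h2)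
  set B : Matrix (Fin n) (Fin n) K :=
    Matrix.single i j (1 : K) + Matrix.single j i (1 : K) with hB
  set p : Fin 2 ⊕ Fin k := Sum.inl 0 with hp
  set q : Fin 2 ⊕ Fin k := Sum.inl 1 with hq
  have hpq : p ≠ q := by simp [hp, hq]
  set F : Fin 2 ⊕ Fin k → Fin n := Sum.elim ![i, j] (fun l => (f l).1) with hF
  set G : Fin 2 ⊕ Fin k → Fin n := Sum.elim ![i, j] (fun l => (g l).1) with hG
  set X : Matrix (Fin 2 ⊕ Fin k) (Fin 2 ⊕ Fin k) K := M.submatrix F G with hX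
  set dp : (Fin 2 ⊕ Fin k) → K := fun s => if s = p then 1 else 0 with hdp
  set dq : (Fin 2 ⊕ Fin k) → K := fun s => if s = q then 1 else 0 with hdq
  -- the big minors all vanish
  have hzero : ∀ t : K, ((M + t • B).submatrix F G).det = 0 := by
    intro t
    by_contra hd
    have hunit : IsUnit ((M + t • B).submatrix F G) :=
      (isUnit_iff_isUnit_det _).mpr (isUnit_iff_ne_zero.mpr hd)
    have h1 := rank_of_isUnit _ hunit
    have h2 := aux_rank_submatrix_le (M + t • B) F G
    have h3 := hrk t
    rw [h1] at h2
    simp only [Fintype.card_sum, Fintype.card_fin] at h2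
    omega
  -- the big minor as a two-column update of X
  have hFi : ∀ s, (i = F s) ↔ (s = p) := by
    rintro (a | l)
    · fin_cases a
      · simp [hF, hp]
      · simp [hF, hp, hq, hij]
    · simp [hF, hp, Ne.symm (f l).2.1]
  have hFj : ∀ s, (j = F s) ↔ (s = q) := by
    rintro (a | l)
    · fin_cases a
      · simp [hF, hp, hq, hij.symm]
      · simp [hF, hq]
    · simp [hF, hq, Ne.symm (f l).2.2]
  have hGi : ∀ c, (i = G c) ↔ (c = p) := by
    rintro (a | l)
    · fin_cases a
      · simp [hG, hp]
      · simp [hG, hp, hq, hij]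
    · simp [hG, hp, Ne.symm (g l).2.1]
  have hGj : ∀ c, (j = G c) ↔ (c = q) := by
    rintro (a | l)
    · fin_cases a
      · simp [hG, hp, hq, hij.symm]
      · simp [hG, hq]
    · simp [hG, hq, Ne.symm (g l).2.2]
  have hform : ∀ t : K, (M + t • B).submatrix F G
      = (X.updateCol p ((fun s => X s p) + t • dq)).updateCol q
          ((fun s => X s q) + t • dp) := by
    intro t
    ext s c
    simp only [Matrix.submatrix_apply, Matrix.add_apply, Matrix.smul_apply, smul_eq_mul, hB,
      Matrix.single, Matrix.of_apply, Matrix.updateCol_apply, Pi.add_apply,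
      Pi.smul_apply, hX, hdp, hdq, hFi, hFj, hGi, hGj]
    by_cases h1 : c = q <;> by_cases h2 : c = p <;>
      by_cases h3 : s = p <;> by_cases h4 : s = q <;>
      simp_all <;> ring
  -- the quadratic relation
  have heq : ∀ t : K, X.det + t * (X.updateCol q dp).det
      + (t * (X.updateCol p dq).det
        + t * (t * ((X.updateCol p dq).updateCol q dp).det)) = 0 := by
    intro t
    rw [← aux_det_update_two X hpq t dp dq, ← hform t]
    exact hzero t
  set a := X.det
  set b2 := (X.updateCol q dp).det
  set b1 := (X.updateCol p dq).det
  set c := ((X.updateCol p dq).updateCol q dp).det with hc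
  have e0 := heq 0
  have e1 := heq 1
  have eu := heq u
  simp only [zero_mul, mul_zero, add_zero, one_mul, mul_one] at e0 e1
  have hcz : u * ((1 : K) - u) * c = 0 := by
    linear_combination u * e1 - eu - (u - 1) * e0
  have hc0 : c = 0 := by
    rcases mul_eq_zero.mp hcz with h | h
    · rcases mul_eq_zero.mp h with h' | h'
      · exact absurd h' hu0
      · exact absurd (sub_eq_zero.mp h').symm hu1
    · exact h
  -- but c is (up to sign) the chosen nonzero minor
  have hZblock : (X.updateCol p dp).updateCol q dq
      = Matrix.fromBlocks (1 : Matrix (Fin 2) (Fin 2) K) (X.submatrix Sum.inl Sum.inr)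
          (0 : Matrix (Fin k) (Fin 2) K) (X.submatrix Sum.inr Sum.inr) := by
    ext s c'
    rcases s with a | l <;> rcases c' with b | m
    · fin_cases a <;> fin_cases b <;>
        simp [Matrix.updateCol_apply, hp, hq, hdp, hdq, Matrix.one_apply]
    · fin_cases a <;> simp [Matrix.updateCol_apply, hp, hq, hdp, hdq]
    · fin_cases b <;> simp [Matrix.updateCol_apply, hp, hq, hdp, hdq]
    · simp [Matrix.updateCol_apply, hp, hq, hdp, hdq]
  have hdetZ : ((X.updateCol p dp).updateCol q dq).det
      = (X.submatrix Sum.inr Sum.inr).det := by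
    rw [hZblock, Matrix.det_fromBlocks_zero₂₁]
    simp
  have hswap : (X.updateCol p dq).updateCol q dp
      = ((X.updateCol p dp).updateCol q dq).submatrix id (Equiv.swap p q) := by
    ext s c'
    by_cases h1 : c' = p
    · subst h1
      simp [Matrix.updateCol_apply, Equiv.swap_apply_left, hpq, hpq.symm]
    · by_cases h2 : c' = q
      · subst h2
        simp [Matrix.updateCol_apply, Equiv.swap_apply_right, hpq, hpq.symm]
      · simp [Matrix.updateCol_apply, Equiv.swap_apply_of_ne_of_ne h1 h2, h1, h2]
  have hXrr : X.submatrix Sum.inr Sum.inr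
      = (M.submatrix
          (fun k : {k : Fin n // k ≠ i ∧ k ≠ j} => k.1)
          (fun k : {k : Fin n // k ≠ i ∧ k ≠ j} => k.1)).submatrix f g := by
    ext l m
    rfl
  have hcne : c ≠ 0 := by
    rw [hc, hswap, det_permute' (Equiv.swap p q), Equiv.Perm.sign_swap hpq, hdetZ, hXrr]
    simpa using hdet
  exact hcne hc0
end

section
/- Let S be a linear subspace of the alternating n×n matrices over a field K with dim S > 3 and with every matrix of S of rank at most 2. Then there exists an invertible P ∈ GL_n(K) such that P S P^T ⊆ WA_{n,1,1}(K), i.e., every matrix of P S P^T has all entries zero outside the first row and first column. -/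
open Matrix

open Submodule Module

namespace AltRank2Aux

set_option linter.unusedSectionVars false

variable {K : Type*} [Field K] {n : ℕ}

def wedge (u v : Fin n → K) : Matrix (Fin n) (Fin n) K :=
  Matrix.of fun i j => u i * v j - v i * u j

@[simp] lemma wedge_apply (u v : Fin n → K) (i j : Fin n) :
    wedge u v i j = u i * v j - v i * u j := rfl

lemma wedge_zero (u : Fin n → K) : wedge u 0 = 0 := by
  ext i j; simp [wedge]

lemma row_mem_range (M : Matrix (Fin n) (Fin n) K) (i : Fin n) :
    M i ∈ LinearMap.range Mᵀ.mulVecLin := by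
  exact ⟨Pi.single i 1, by simp [Matrix.mulVecLin_apply, Matrix.mulVec_single_one, Matrix.row_apply']⟩

lemma range_pair (u v : Fin n → K) : Set.range ![u, v] = {u, v} := by
  simp [Matrix.range_cons, Matrix.range_empty]
  exact Set.pair_comm v u

lemma finrank_span_pair {u v : Fin n → K} (h : LinearIndependent K ![u, v]) :
    finrank K (span K ({u, v} : Set (Fin n → K))) = 2 := by
  rw [← range_pair u v, finrank_span_eq_card h]
  simp

lemma pluecker {M : Matrix (Fin n) (Fin n) K} (hsk : Mᵀ = -M) (hd : ∀ i, M i i = 0)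
    (hr : M.rank ≤ 2) {i j : Fin n} (hc : M i j ≠ 0) (k l : Fin n) :
    M i j * M k l = M i k * M j l - M j k * M i l := by
  have hji : M j i = -M i j := by
    have := congrFun (congrFun hsk i) j
    simpa [Matrix.transpose_apply] using this
  have hind : LinearIndependent K ![M i, M j] := by
    rw [LinearIndependent.pair_iff]
    intro s t hst
    have h1 := congrFun hst j
    have h2 := congrFun hst i
    simp [hd, hji] at h1 h2
    exact ⟨h1.resolve_right hc, h2.resolve_right hc⟩
  have hle : span K ({M i, M j} : Set (Fin n → K)) ≤ LinearMap.range Mᵀ.mulVecLin := by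
    rw [span_le]
    rintro x (rfl | rfl)
    · exact row_mem_range M i
    · exact row_mem_range M j
  have hfr : finrank K (LinearMap.range Mᵀ.mulVecLin) ≤ 2 := by
    have : Mᵀ.rank ≤ 2 := by rwa [Matrix.rank_transpose]
    exact this
  have heq : span K ({M i, M j} : Set (Fin n → K)) = LinearMap.range Mᵀ.mulVecLin := by
    apply Submodule.eq_of_le_of_finrank_le hle
    rw [finrank_span_pair hind]
    exact hfr
  have hk : M k ∈ span K ({M i, M j} : Set (Fin n → K)) := by
    rw [heq]; exact row_mem_range M k
  rw [Submodule.mem_span_pair] at hk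
  obtain ⟨a, b, hab⟩ := hk
  have hi := congrFun hab i
  have hj := congrFun hab j
  have hl := congrFun hab l
  simp [hd, hji] at hi hj hl
  -- hi : -(b * M i j) = M k i ; hj : a * M i j = M k j
  have hki : M k i = -M i k := by
    have := congrFun (congrFun hsk i) k
    simpa using this
  have hkj : M k j = -M j k := by
    have := congrFun (congrFun hsk j) k
    simpa using this
  rw [← hl]
  rw [hki] at hi
  rw [hkj] at hj
  -- solve: a * M i l + b * M j l, with a, b expressed
  linear_combination M i l * hj - M j l * hi

lemma decompose {M : Matrix (Fin n) (Fin n) K} (hsk : Mᵀ = -M) (hd : ∀ i, M i i = 0)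
    (hr : M.rank ≤ 2) (hM : M ≠ 0) :
    ∃ u v, LinearIndependent K ![u, v] ∧ M = wedge u v := by
  obtain ⟨i, j, hc⟩ : ∃ i j, M i j ≠ 0 := by
    by_contra h; push_neg at h; exact hM (by ext i j; simpa using h i j)
  have hji : M j i = -M i j := by
    have := congrFun (congrFun hsk i) j; simpa using this
  refine ⟨(M i j)⁻¹ • M i, M j, ?_, ?_⟩
  · rw [LinearIndependent.pair_iff]
    intro s t hst
    have h1 := congrFun hst j
    have h2 := congrFun hst i
    simp [hd, hji, Pi.smul_apply] at h1 h2
    exact ⟨h1.resolve_right hc, h2.resolve_right hc⟩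
  · ext k l
    have hp := pluecker hsk hd hr hc k l
    simp only [wedge_apply, Pi.smul_apply, smul_eq_mul]
    field_simp
    linear_combination hp

lemma exists_dual {u v u' v' : Fin n → K} (h : LinearIndependent K ![u, v, u', v'])
    (c : Fin 4 → K) :
    ∃ x : Fin n → K, u ⬝ᵥ x = c 0 ∧ v ⬝ᵥ x = c 1 ∧ u' ⬝ᵥ x = c 2 ∧ v' ⬝ᵥ x = c 3 := by
  set B : Matrix (Fin 4) (Fin n) K := Matrix.of ![u, v, u', v'] with hB
  have h4 : Bᵀ.rank = 4 := by
    rw [Matrix.rank, Matrix.range_mulVecLin]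
    have : Bᵀ.col = ![u, v, u', v'] := rfl
    rw [this, finrank_span_eq_card h]
    simp
  have hrank : B.rank = 4 := by rw [← Matrix.rank_transpose]; exact h4
  have htop : LinearMap.range B.mulVecLin = ⊤ := by
    apply Submodule.eq_top_of_finrank_eq
    rw [← Matrix.rank] at *
    rw [hrank]
    simp [Module.finrank_pi]
  have hc : c ∈ LinearMap.range B.mulVecLin := by rw [htop]; trivial
  obtain ⟨x, hx⟩ := hc
  refine ⟨x, ?_, ?_, ?_, ?_⟩
  · have := congrFun hx 0
    simpa [Matrix.mulVecLin_apply, Matrix.mulVec, hB] using this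
  · have := congrFun hx 1
    simpa [Matrix.mulVecLin_apply, Matrix.mulVec, hB] using this
  · have := congrFun hx 2
    simpa [Matrix.mulVecLin_apply, Matrix.mulVec, hB] using this
  · have := congrFun hx 3
    simpa [Matrix.mulVecLin_apply, Matrix.mulVec, hB] using this

lemma wedge_mulVec (u v x : Fin n → K) :
    (wedge u v) *ᵥ x = (v ⬝ᵥ x) • u - (u ⬝ᵥ x) • v := by
  funext i
  simp only [Matrix.mulVec, dotProduct, wedge_apply, Pi.sub_apply, Pi.smul_apply, smul_eq_mul]
  rw [Finset.sum_congr rfl fun j (_ : j ∈ Finset.univ) =>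
    (by ring : (u i * v j - v i * u j) * x j = u i * (v j * x j) - v i * (u j * x j)),
    Finset.sum_sub_distrib, ← Finset.mul_sum, ← Finset.mul_sum]
  ring

lemma range_quad (u v u' v' : Fin n → K) :
    Set.range ![u, v, u', v'] = {u, v, u', v'} := by
  ext x
  simp [Fin.exists_fin_succ, Fin.exists_fin_two]
  tauto

lemma planes_meet {u v u' v' : Fin n → K} (hu : LinearIndependent K ![u, v])
    (hu' : LinearIndependent K ![u', v'])
    (hr : (wedge u v + wedge u' v').rank ≤ 2) :
    ∃ z : Fin n → K, z ≠ 0 ∧ z ∈ span K ({u, v} : Set (Fin n → K)) ∧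
      z ∈ span K ({u', v'} : Set (Fin n → K)) := by
  by_cases h4 : LinearIndependent K ![u, v, u', v']
  · exfalso
    set N := wedge u v + wedge u' v' with hN
    have hmv : ∀ x, N *ᵥ x =
        ((v ⬝ᵥ x) • u - (u ⬝ᵥ x) • v) + ((v' ⬝ᵥ x) • u' - (u' ⬝ᵥ x) • v') := by
      intro x
      rw [hN, Matrix.add_mulVec, wedge_mulVec, wedge_mulVec]
    have hgen : ∀ w ∈ ({u, v, u', v'} : Set (Fin n → K)),
        w ∈ LinearMap.range N.mulVecLin := by
      rintro w (rfl | rfl | rfl | rfl)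
      · obtain ⟨x, h0, h1, h2, h3⟩ := exists_dual h4 ![0, 1, 0, 0]
        exact ⟨x, by simp [Matrix.mulVecLin_apply, hmv, h0, h1, h2, h3]⟩
      · obtain ⟨x, h0, h1, h2, h3⟩ := exists_dual h4 ![-1, 0, 0, 0]
        exact ⟨x, by simp [Matrix.mulVecLin_apply, hmv, h0, h1, h2, h3]⟩
      · obtain ⟨x, h0, h1, h2, h3⟩ := exists_dual h4 ![0, 0, 0, 1]
        exact ⟨x, by simp [Matrix.mulVecLin_apply, hmv, h0, h1, h2, h3]⟩
      · obtain ⟨x, h0, h1, h2, h3⟩ := exists_dual h4 ![0, 0, -1, 0]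
        exact ⟨x, by simp [Matrix.mulVecLin_apply, hmv, h0, h1, h2, h3]⟩
    have hle : span K ({u, v, u', v'} : Set (Fin n → K)) ≤ LinearMap.range N.mulVecLin :=
      span_le.2 hgen
    have h44 : finrank K (span K ({u, v, u', v'} : Set (Fin n → K))) = 4 := by
      rw [← range_quad, finrank_span_eq_card h4]; simp
    have : (4 : ℕ) ≤ N.rank := by
      rw [Matrix.rank, ← h44]
      exact Submodule.finrank_mono hle
    omega
  · rw [Fintype.not_linearIndependent_iff] at h4
    obtain ⟨g, hg, i, hi⟩ := h4
    rw [Fin.sum_univ_four] at hg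
    have hg : g 0 • u + g 1 • v + g 2 • u' + g 3 • v' = 0 := by
      simpa using hg
    have hg23 : ¬(g 2 = 0 ∧ g 3 = 0) := by
      rintro ⟨h2, h3⟩
      rw [h2, h3, zero_smul, zero_smul, add_zero, add_zero] at hg
      obtain ⟨e0, e1⟩ := LinearIndependent.pair_iff.1 hu _ _ hg
      fin_cases i <;> simp_all
    refine ⟨g 2 • u' + g 3 • v', ?_, ?_, ?_⟩
    · intro h0
      rw [LinearIndependent.pair_iff] at hu'
      exact hg23 (hu' _ _ h0)
    · rw [Submodule.mem_span_pair]
      refine ⟨-g 0, -g 1, ?_⟩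
      have : g 0 • u + g 1 • v + (g 2 • u' + g 3 • v') = 0 := by
        rw [← hg]; module
      linear_combination (norm := module) -this
    · exact Submodule.mem_span_pair.2 ⟨g 2, g 3, rfl⟩

lemma indep_pair_of_not_mem {x y : Fin n → K} (hx : x ≠ 0)
    (hy : y ∉ span K ({x} : Set (Fin n → K))) : LinearIndependent K ![x, y] := by
  rw [LinearIndependent.pair_iff' hx]
  intro a ha
  exact hy (ha ▸ Submodule.smul_mem _ a (Submodule.mem_span_singleton_self x))

lemma span_pair_eq {a b u v : Fin n → K} (hab : LinearIndependent K ![a, b])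
    (huv : LinearIndependent K ![u, v])
    (h : span K ({a, b} : Set (Fin n → K)) ≤ span K ({u, v} : Set (Fin n → K))) :
    span K ({a, b} : Set (Fin n → K)) = span K ({u, v} : Set (Fin n → K)) :=
  Submodule.eq_of_le_of_finrank_le h
    (by rw [finrank_span_pair hab, finrank_span_pair huv])

lemma wedge_of_mem_span {u v e : Fin n → K} (he : e ∈ span K ({u, v} : Set (Fin n → K)))
    (he0 : e ≠ 0) : ∃ w, wedge u v = wedge e w := by
  obtain ⟨a, b, hab⟩ := Submodule.mem_span_pair.1 he
  by_cases ha : a = 0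
  · have hb : b ≠ 0 := by
      rintro rfl
      rw [ha] at hab
      simp only [zero_smul, add_zero, zero_add] at hab
      exact he0 hab.symm
    refine ⟨(-(b⁻¹)) • u, ?_⟩
    ext i j
    have hei := congrFun hab i
    have hej := congrFun hab j
    simp only [Pi.add_apply, Pi.smul_apply, smul_eq_mul, ha, zero_mul, zero_add] at hei hej
    simp only [wedge_apply, Pi.smul_apply, smul_eq_mul, ← hei, ← hej]
    field_simp
    ring
  · refine ⟨a⁻¹ • v, ?_⟩
    ext i j
    have hei := congrFun hab i
    have hej := congrFun hab j
    simp only [Pi.add_apply, Pi.smul_apply, smul_eq_mul] at hei hej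
    simp only [wedge_apply, Pi.smul_apply, smul_eq_mul, ← hei, ← hej]
    field_simp
    ring

lemma range_triple (e p q : Fin n → K) : ({e, p, q} : Set (Fin n → K)) = Set.range ![e, p, q] := by
  ext x
  simp [Fin.exists_fin_succ, Fin.exists_fin_two]
  tauto

lemma wedge_mem_span_triple {e p q u v : Fin n → K}
    (hu : u ∈ span K ({e, p, q} : Set (Fin n → K)))
    (hv : v ∈ span K ({e, p, q} : Set (Fin n → K))) :
    wedge u v ∈ span K ({wedge e p, wedge e q, wedge p q} : Set (Matrix (Fin n) (Fin n) K)) := by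
  rw [range_triple, mem_span_range_iff_exists_fun] at hu hv
  obtain ⟨c, hc⟩ := hu
  obtain ⟨d, hd⟩ := hv
  rw [Fin.sum_univ_three] at hc hd
  have hc : c 0 • e + c 1 • p + c 2 • q = u := by simpa using hc
  have hd : d 0 • e + d 1 • p + d 2 • q = v := by simpa using hd
  have hkey : wedge u v = (c 0 * d 1 - c 1 * d 0) • wedge e p
      + (c 0 * d 2 - c 2 * d 0) • wedge e q + (c 1 * d 2 - c 2 * d 1) • wedge p q := by
    ext i j
    have hui := congrFun hc i
    have huj := congrFun hc j
    have hvi := congrFun hd i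
    have hvj := congrFun hd j
    simp only [Pi.add_apply, Pi.smul_apply, smul_eq_mul] at hui huj hvi hvj
    simp only [Matrix.add_apply, Matrix.smul_apply, wedge_apply, smul_eq_mul,
      ← hui, ← huj, ← hvi, ← hvj]
    ring
  rw [hkey]
  refine add_mem (add_mem (Submodule.smul_mem _ _ ?_) (Submodule.smul_mem _ _ ?_))
    (Submodule.smul_mem _ _ ?_) <;> apply subset_span <;> simp

lemma wedge_mem_span_single {a b u v : Fin n → K}
    (hu : u ∈ span K ({a, b} : Set (Fin n → K)))
    (hv : v ∈ span K ({a, b} : Set (Fin n → K))) :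
    wedge u v ∈ span K ({wedge a b} : Set (Matrix (Fin n) (Fin n) K)) := by
  obtain ⟨c0, c1, hc⟩ := Submodule.mem_span_pair.1 hu
  obtain ⟨d0, d1, hd⟩ := Submodule.mem_span_pair.1 hv
  have hkey : wedge u v = (c0 * d1 - c1 * d0) • wedge a b := by
    ext i j
    have hui := congrFun hc i
    have huj := congrFun hc j
    have hvi := congrFun hd i
    have hvj := congrFun hd j
    simp only [Pi.add_apply, Pi.smul_apply, smul_eq_mul] at hui huj hvi hvj
    simp only [Matrix.smul_apply, wedge_apply, smul_eq_mul, ← hui, ← huj, ← hvi, ← hvj]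
    ring
  rw [hkey]
  exact Submodule.smul_mem _ _ (Submodule.mem_span_singleton_self _)

lemma conj_wedge (P : Matrix (Fin n) (Fin n) K) (u v : Fin n → K) :
    P * wedge u v * Pᵀ = wedge (P *ᵥ u) (P *ᵥ v) := by
  ext i j
  simp only [Matrix.mul_apply, wedge_apply, Matrix.transpose_apply, Matrix.mulVec, dotProduct]
  have inner : ∀ b, (∑ a, P i a * (u a * v b - v a * u b))
      = (∑ a, P i a * u a) * v b - (∑ a, P i a * v a) * u b := by
    intro b
    rw [Finset.sum_congr rfl fun a (_ : a ∈ Finset.univ) =>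
      (by ring : P i a * (u a * v b - v a * u b) = P i a * u a * v b - P i a * v a * u b),
      Finset.sum_sub_distrib, ← Finset.sum_mul, ← Finset.sum_mul]
  rw [Finset.sum_congr rfl fun b (_ : b ∈ Finset.univ) => by rw [inner b]]
  rw [Finset.sum_congr rfl fun b (_ : b ∈ Finset.univ) =>
    (by ring : ((∑ a, P i a * u a) * v b - (∑ a, P i a * v a) * u b) * P j b
      = (∑ a, P i a * u a) * (P j b * v b) - (∑ a, P i a * v a) * (P j b * u b)),
    Finset.sum_sub_distrib, ← Finset.mul_sum, ← Finset.mul_sum]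

lemma final_P {e : Fin n → K} {k : Fin n} (hek : e k ≠ 0) :
    ∃ P : Matrix (Fin n) (Fin n) K, IsUnit P ∧ ∀ i : Fin n, 0 < i.1 → (P *ᵥ e) i = 0 := by
  haveI : NeZero n := ⟨by have := k.pos; omega⟩
  set τ := Equiv.swap (0 : Fin n) k with hτ
  set N : Matrix (Fin n) (Fin n) K :=
    Matrix.of fun i m => if i ≠ 0 ∧ m = 0 then e (τ i) / e k else 0 with hN
  set Pτ : Matrix (Fin n) (Fin n) K :=
    Matrix.of fun i j => if τ i = j then 1 else 0 with hPτ
  have hNN : N * N = 0 := by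
    ext i j
    rw [Matrix.mul_apply]
    apply Finset.sum_eq_zero
    intro m _
    by_cases hm : m = 0
    · subst hm
      have : N 0 j = 0 := by simp [hN]
      rw [this, mul_zero]
    · have : N i m = 0 := by simp [hN, hm]
      rw [this, zero_mul]
    -- done
  have hττ : Pτ * Pτ = 1 := by
    ext i j
    rw [Matrix.mul_apply, Finset.sum_eq_single (τ i)]
    · simp only [hPτ, Matrix.of_apply, if_pos rfl, one_mul, Equiv.swap_apply_self,
        Matrix.one_apply]
      have : τ (τ i) = i := Equiv.swap_apply_self _ _ _
      rw [this]
      by_cases h : i = j <;> simp [h, eq_comm]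
    · intro m _ hm
      simp [hPτ, Ne.symm hm]
    · intro h
      exact absurd (Finset.mem_univ _) h
  set P := (1 - N) * Pτ with hP
  set Q := Pτ * (1 + N) with hQ
  have hPQ : P * Q = 1 := by
    have h1 : P * Q = (1 - N) * (Pτ * Pτ) * (1 + N) := by
      rw [hP, hQ]; noncomm_ring
    rw [h1, hττ, mul_one]
    have h2 : (1 - N) * (1 + N) = 1 - N * N := by noncomm_ring
    rw [h2, hNN, sub_zero]
  refine ⟨P, ⟨⟨P, Q, hPQ, mul_eq_one_comm.mp hPQ⟩, rfl⟩, ?_⟩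
  intro i hi
  have hi0 : i ≠ 0 := by
    intro h; rw [h] at hi; simp at hi
  have hPτe : Pτ *ᵥ e = fun i => e (τ i) := by
    funext i
    simp only [Matrix.mulVec, dotProduct, hPτ, Matrix.of_apply, ite_mul, one_mul, zero_mul]
    rw [Finset.sum_eq_single (τ i)]
    · simp
    · intro m _ hm; simp [Ne.symm hm]
    · intro h; exact absurd (Finset.mem_univ _) h
  have : P *ᵥ e = (1 - N) *ᵥ (Pτ *ᵥ e) := by
    rw [hP, ← Matrix.mulVec_mulVec]
  rw [this, hPτe]
  rw [Matrix.sub_mulVec, Matrix.one_mulVec]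
  simp only [Pi.sub_apply]
  have hNe : (N *ᵥ fun i => e (τ i)) i = e (τ i) := by
    simp only [Matrix.mulVec, dotProduct, hN, Matrix.of_apply, ite_mul, zero_mul]
    rw [Finset.sum_eq_single (0 : Fin n)]
    · have h0 : τ (0 : Fin n) = k := Equiv.swap_apply_left _ _
      simp [hi0, h0, div_mul_cancel₀ _ hek]
    · intro m _ hm
      simp [hm]
    · intro h; exact absurd (Finset.mem_univ _) h
  rw [hNe, sub_self]

lemma span_singleton_symm {V : Type*} [AddCommGroup V] [Module K V] {x y : V} (hy : y ≠ 0)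
    (h : y ∈ span K ({x} : Set V)) : x ∈ span K ({y} : Set V) := by
  rw [Submodule.mem_span_singleton] at h ⊢
  obtain ⟨a, rfl⟩ := h
  have ha : a ≠ 0 := by rintro rfl; simp at hy
  exact ⟨a⁻¹, by rw [smul_smul, inv_mul_cancel₀ ha, one_smul]⟩

end AltRank2Aux

open AltRank2Aux Submodule Module

theorem alt_rank_two_classification (K : Type*) [Field K] (n : ℕ)
    (S : Submodule K (Matrix (Fin n) (Fin n) K))
    (hAlt : ∀ M ∈ S, Mᵀ = -M ∧ ∀ i : Fin n, M i i = 0)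
    (hdim : 3 < Module.finrank K S)
    (hrk : ∀ M ∈ S, M.rank ≤ 2) :
    ∃ P : Matrix (Fin n) (Fin n) K, IsUnit P ∧
      ∀ M ∈ S, ∀ i j : Fin n, 1 ≤ i.1 → 1 ≤ j.1 → (P * M * Pᵀ) i j = 0 := by
  classical
  have hdec : ∀ M ∈ S, M ≠ 0 → ∃ u v, LinearIndependent K ![u, v] ∧ M = wedge u v :=
    fun M hM h0 => decompose (hAlt M hM).1 (hAlt M hM).2 (hrk M hM) h0
  have hmeet : ∀ (M N : Matrix (Fin n) (Fin n) K), M ∈ S → N ∈ S →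
      ∀ u v u' v' : Fin n → K, LinearIndependent K ![u, v] → LinearIndependent K ![u', v'] →
      M = wedge u v → N = wedge u' v' →
      ∃ z, z ≠ 0 ∧ z ∈ span K ({u, v} : Set (Fin n → K)) ∧
        z ∈ span K ({u', v'} : Set (Fin n → K)) := by
    intro M N hM hN u v u' v' hu hu' hMe hNe
    subst hMe; subst hNe
    exact planes_meet hu hu' (hrk _ (S.add_mem hM hN))
  -- step 1 : a nonzero element
  have hSbot : S ≠ ⊥ := by
    intro h; rw [h, finrank_bot] at hdim; omega
  obtain ⟨M₁, hM₁S, hM₁0⟩ := Submodule.exists_mem_ne_zero_of_ne_bot hSbot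
  obtain ⟨u₁, v₁, hind₁, hM₁⟩ := hdec M₁ hM₁S hM₁0
  -- step 2 : an element outside span {M₁}
  obtain ⟨M₂, hM₂S, hM₂ns⟩ : ∃ M ∈ S, M ∉ span K ({M₁} : Set (Matrix (Fin n) (Fin n) K)) := by
    by_contra h; push_neg at h
    have hle : S ≤ span K ({M₁} : Set (Matrix (Fin n) (Fin n) K)) := h
    have := Submodule.finrank_mono hle
    rw [finrank_span_singleton hM₁0] at this
    omega
  have hM₂0 : M₂ ≠ 0 := by rintro rfl; exact hM₂ns (Submodule.zero_mem _)
  obtain ⟨u₂, v₂, hind₂, hM₂⟩ := hdec M₂ hM₂S hM₂0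
  have h12 : span K ({u₁, v₁} : Set (Fin n → K)) ≠ span K ({u₂, v₂} : Set (Fin n → K)) := by
    intro heq
    apply hM₂ns
    rw [hM₂, hM₁]
    exact wedge_mem_span_single (heq ▸ subset_span (by simp)) (heq ▸ subset_span (by simp))
  obtain ⟨e, he0, heU₁, heU₂⟩ := hmeet M₁ M₂ hM₁S hM₂S u₁ v₁ u₂ v₂ hind₁ hind₂ hM₁ hM₂
  by_cases hall : ∀ M ∈ S, ∃ w, M = wedge e w
  · obtain ⟨k, hek⟩ := Function.ne_iff.mp he0
    have hek : e k ≠ 0 := by simpa using hek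
    obtain ⟨P, hPunit, hPe⟩ := final_P hek
    refine ⟨P, hPunit, ?_⟩
    intro M hM i j hi hj
    obtain ⟨w, rfl⟩ := hall M hM
    rw [conj_wedge]
    rw [wedge_apply, hPe i (by omega), hPe j (by omega)]
    ring
  · exfalso
    push_neg at hall
    obtain ⟨M₃, hM₃S, hM₃w⟩ := hall
    have hM₃0 : M₃ ≠ 0 := fun h => hM₃w 0 (by rw [h, wedge_zero])
    obtain ⟨u₃, v₃, hind₃, hM₃⟩ := hdec M₃ hM₃S hM₃0
    have heU₃ : e ∉ span K ({u₃, v₃} : Set (Fin n → K)) := by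
      intro h
      obtain ⟨w, hw⟩ := wedge_of_mem_span h he0
      exact hM₃w w (by rw [hM₃, hw])
    -- the intersection of the first two planes is span {e}
    have hinter : ∀ x, x ∈ span K ({u₁, v₁} : Set (Fin n → K)) →
        x ∈ span K ({u₂, v₂} : Set (Fin n → K)) → x ∈ span K ({e} : Set (Fin n → K)) := by
      intro x hx1 hx2
      by_contra hx
      have hex : LinearIndependent K ![e, x] := indep_pair_of_not_mem he0 hx
      have heq1 : span K ({e, x} : Set (Fin n → K)) = span K ({u₁, v₁} : Set (Fin n → K)) :=
        span_pair_eq hex hind₁ (span_le.2 (by rintro y (rfl | rfl) <;> assumption))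
      have heq2 : span K ({e, x} : Set (Fin n → K)) = span K ({u₂, v₂} : Set (Fin n → K)) :=
        span_pair_eq hex hind₂ (span_le.2 (by rintro y (rfl | rfl) <;> assumption))
      exact h12 (heq1 ▸ heq2)
    -- choose p, q
    have hex_p : ∃ p, p ∈ span K ({u₁, v₁} : Set (Fin n → K)) ∧
        p ∉ span K ({e} : Set (Fin n → K)) := by
      by_contra h; push_neg at h
      have hle : span K ({u₁, v₁} : Set (Fin n → K)) ≤ span K ({e} : Set (Fin n → K)) :=
        fun y hy => h y hy
      have h1 := Submodule.finrank_mono hle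
      rw [finrank_span_pair hind₁, finrank_span_singleton he0] at h1
      omega
    have hex_q : ∃ q, q ∈ span K ({u₂, v₂} : Set (Fin n → K)) ∧
        q ∉ span K ({e} : Set (Fin n → K)) := by
      by_contra h; push_neg at h
      have hle : span K ({u₂, v₂} : Set (Fin n → K)) ≤ span K ({e} : Set (Fin n → K)) :=
        fun y hy => h y hy
      have h1 := Submodule.finrank_mono hle
      rw [finrank_span_pair hind₂, finrank_span_singleton he0] at h1
      omega
    obtain ⟨p, hpU₁, hpe⟩ := hex_p
    obtain ⟨q, hqU₂, hqe⟩ := hex_q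
    have hU₁ : span K ({e, p} : Set (Fin n → K)) = span K ({u₁, v₁} : Set (Fin n → K)) :=
      span_pair_eq (indep_pair_of_not_mem he0 hpe) hind₁
        (span_le.2 (by rintro y (rfl | rfl) <;> assumption))
    have hU₂ : span K ({e, q} : Set (Fin n → K)) = span K ({u₂, v₂} : Set (Fin n → K)) :=
      span_pair_eq (indep_pair_of_not_mem he0 hqe) hind₂
        (span_le.2 (by rintro y (rfl | rfl) <;> assumption))
    set W : Submodule K (Fin n → K) := span K ({e, p, q} : Set (Fin n → K)) with hW
    have hU₁W : span K ({u₁, v₁} : Set (Fin n → K)) ≤ W := by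
      rw [← hU₁]
      exact span_mono (by
        intro y hy
        simp only [Set.mem_insert_iff, Set.mem_singleton_iff] at hy ⊢
        tauto)
    have hU₂W : span K ({u₂, v₂} : Set (Fin n → K)) ≤ W := by
      rw [← hU₂]
      exact span_mono (by
        intro y hy
        simp only [Set.mem_insert_iff, Set.mem_singleton_iff] at hy ⊢
        tauto)
    -- U₃ ≤ W
    obtain ⟨f, hf0, hfU₃, hfU₁⟩ := hmeet M₃ M₁ hM₃S hM₁S u₃ v₃ u₁ v₁ hind₃ hind₁ hM₃ hM₁
    obtain ⟨g, hg0, hgU₃, hgU₂⟩ := hmeet M₃ M₂ hM₃S hM₂S u₃ v₃ u₂ v₂ hind₃ hind₂ hM₃ hM₂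
    have hfg : LinearIndependent K ![f, g] := by
      apply indep_pair_of_not_mem hf0
      intro hgf
      have hfg' : f ∈ span K ({g} : Set (Fin n → K)) := span_singleton_symm hg0 hgf
      have hfU₂ : f ∈ span K ({u₂, v₂} : Set (Fin n → K)) :=
        (span_le.2 (by rintro y rfl; exact hgU₂)) hfg'
      have hfe : f ∈ span K ({e} : Set (Fin n → K)) := hinter f hfU₁ hfU₂
      have hef : e ∈ span K ({f} : Set (Fin n → K)) := span_singleton_symm hf0 hfe
      exact heU₃ ((span_le.2 (by rintro y rfl; exact hfU₃)) hef)
    have hU₃eq : span K ({f, g} : Set (Fin n → K)) = span K ({u₃, v₃} : Set (Fin n → K)) :=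
      span_pair_eq hfg hind₃ (span_le.2 (by rintro y (rfl | rfl) <;> assumption))
    have hU₃W : span K ({u₃, v₃} : Set (Fin n → K)) ≤ W := by
      rw [← hU₃eq]
      apply span_le.2
      rintro y (rfl | rfl)
      · exact hU₁W hfU₁
      · exact hU₂W hgU₂
    have heW : e ∈ W := subset_span (by simp)
    -- every element of S lies in T
    set T : Submodule K (Matrix (Fin n) (Fin n) K) :=
      span K ({wedge e p, wedge e q, wedge p q} : Set (Matrix (Fin n) (Fin n) K)) with hT
    have hST : S ≤ T := by
      intro M hM
      by_cases h0 : M = 0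
      · rw [h0]; exact Submodule.zero_mem _
      obtain ⟨u, v, hind, hMeq⟩ := hdec M hM h0
      suffices hUW : span K ({u, v} : Set (Fin n → K)) ≤ W by
        rw [hMeq]
        exact wedge_mem_span_triple (hUW (subset_span (by simp)))
          (hUW (subset_span (by simp [Set.mem_insert_iff])))
      obtain ⟨f', hf'0, hf'U, hf'U₁⟩ := hmeet M M₁ hM hM₁S u v u₁ v₁ hind hind₁ hMeq hM₁
      obtain ⟨g', hg'0, hg'U, hg'U₂⟩ := hmeet M M₂ hM hM₂S u v u₂ v₂ hind hind₂ hMeq hM₂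
      by_cases hcase : g' ∈ span K ({f'} : Set (Fin n → K))
      · have hf'g' : f' ∈ span K ({g'} : Set (Fin n → K)) := span_singleton_symm hg'0 hcase
        have hf'U₂ : f' ∈ span K ({u₂, v₂} : Set (Fin n → K)) :=
          (span_le.2 (by rintro y rfl; exact hg'U₂)) hf'g'
        have hf'e : f' ∈ span K ({e} : Set (Fin n → K)) := hinter f' hf'U₁ hf'U₂
        have heU : e ∈ span K ({u, v} : Set (Fin n → K)) :=
          (span_le.2 (by rintro y rfl; exact hf'U)) (span_singleton_symm hf'0 hf'e)
        obtain ⟨z, hz0, hzU, hzU₃⟩ := hmeet M M₃ hM hM₃S u v u₃ v₃ hind hind₃ hMeq hM₃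
        have hze : z ∉ span K ({e} : Set (Fin n → K)) := by
          intro h
          exact heU₃ ((span_le.2 (by rintro y rfl; exact hzU₃)) (span_singleton_symm hz0 h))
        have hez : LinearIndependent K ![e, z] := indep_pair_of_not_mem he0 hze
        have heqz : span K ({e, z} : Set (Fin n → K)) = span K ({u, v} : Set (Fin n → K)) :=
          span_pair_eq hez hind (span_le.2 (by rintro y (rfl | rfl) <;> assumption))
        rw [← heqz]
        apply span_le.2
        rintro y (rfl | rfl)
        · exact heW
        · exact hU₃W hzU₃
      · have hf'g' : LinearIndependent K ![f', g'] := indep_pair_of_not_mem hf'0 hcase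
        have heqz : span K ({f', g'} : Set (Fin n → K)) = span K ({u, v} : Set (Fin n → K)) :=
          span_pair_eq hf'g' hind (span_le.2 (by rintro y (rfl | rfl) <;> assumption))
        rw [← heqz]
        apply span_le.2
        rintro y (rfl | rfl)
        · exact hU₁W hf'U₁
        · exact hU₂W hg'U₂
    have hfin : finrank K S ≤ finrank K T := Submodule.finrank_mono hST
    have hT3 : finrank K T ≤ 3 := by
      rw [hT]
      refine le_trans (finrank_span_le_card _) ?_
      rw [Set.toFinset_insert, Set.toFinset_insert, Set.toFinset_singleton]
      refine le_trans (Finset.card_insert_le _ _) ?_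
      have := Finset.card_insert_le (wedge e q) ({wedge p q} : Finset (Matrix (Fin n) (Fin n) K))
      simp at this ⊢
      omega
    omega
end

section
/- Let K be a field, n and s positive integers with 2s < n - 1, and let S be a linear subspace of alternating n×n matrices with every matrix of S of rank at most 2s. Write each M ∈ S in block form with blocks of sizes (s, n-1-s, 1): M = [[?, -B(M)^T, ?],[B(M), 0, C(M)],[?, -C(M)^T, 0]], where the middle (n-1-s)×(n-1-s) block is assumed zero for all M ∈ S. Then for every M ∈ S, the (n-1-s)×(s+1) matrix [B(M) | C(M)] has rank at most s. -/
open Matrix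

lemma key_rank {n : ℕ} {K : Type*} [Field K] (A D : Matrix (Fin n) (Fin n) K)
    (h : D * A * D = 0) : (A * D).rank + (D * A).rank ≤ A.rank := by
  classical
  set f := A.mulVecLin with hf
  set g := D.mulVecLin with hg
  set p := LinearMap.range f with hp
  set h' : p →ₗ[K] (Fin n → K) := g ∘ₗ p.subtype with hh'
  have hsum : Module.finrank K (LinearMap.range h') + Module.finrank K (LinearMap.ker h')
      = Module.finrank K p := LinearMap.finrank_range_add_finrank_ker h'
  -- rank A = finrank p
  have hrA : A.rank = Module.finrank K p := rfl
  -- rank (D*A) ≤ finrank (range h')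
  have hDA : (D * A).rank ≤ Module.finrank K (LinearMap.range h') := by
    have : LinearMap.range h' = Submodule.map g p := by
      rw [hh', LinearMap.range_comp, Submodule.range_subtype]
    rw [this]
    have : (D * A).mulVecLin = g ∘ₗ f := by rw [hg, hf, mulVecLin_mul]
    rw [Matrix.rank, this, LinearMap.range_comp]
  -- rank (A*D) ≤ finrank (ker h')
  have hAD : (A * D).rank ≤ Module.finrank K (LinearMap.ker h') := by
    have hker : LinearMap.ker h' = Submodule.comap p.subtype (LinearMap.ker g) := by
      rw [hh', LinearMap.ker_comp]
    have hfin : Module.finrank K (LinearMap.ker h')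
        = Module.finrank K (p ⊓ LinearMap.ker g : Submodule K (Fin n → K)) := by
      rw [hker, ← Submodule.map_comap_subtype, Submodule.finrank_map_subtype_eq]
    rw [hfin]
    have hle : LinearMap.range (A * D).mulVecLin ≤ p ⊓ LinearMap.ker g := by
      refine le_inf ?_ ?_
      · rw [mulVecLin_mul, hp]; exact LinearMap.range_comp_le_range _ _
      · rintro x ⟨v, rfl⟩
        have : g ((A * D).mulVecLin v) = (D * (A * D)).mulVecLin v := by
          simp [hg, mulVecLin_mul]
        simp only [LinearMap.mem_ker, this, ← mul_assoc, h]
        simp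
    exact Submodule.finrank_mono hle
  rw [hrA, ← hsum]
  omega

theorem BC_rank_le (K : Type*) [Field K] (n s : ℕ) (hs : 0 < s) (hn : 2 * s < n - 1)
    (S : Submodule K (Matrix (Fin n) (Fin n) K))
    (hAlt : ∀ M ∈ S, Mᵀ = -M ∧ ∀ i : Fin n, M i i = 0)
    (hmid : ∀ M ∈ S, ∀ i j : Fin n,
      s ≤ i.1 → i.1 < n - 1 → s ≤ j.1 → j.1 < n - 1 → M i j = 0)
    (hrk : ∀ M ∈ S, M.rank ≤ 2 * s) :
    ∀ M ∈ S,
      (Matrix.of (fun (i : Fin (n - 1 - s)) (j : Fin (s + 1)) =>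
        if h : j.1 < s then
          M ⟨s + i.1, by have := i.2; omega⟩ ⟨j.1, by omega⟩
        else
          M ⟨s + i.1, by have := i.2; omega⟩ ⟨n - 1, by omega⟩)).rank ≤ s := by
  classical
  intro M hM
  set N : Matrix (Fin (n - 1 - s)) (Fin (s + 1)) K :=
    Matrix.of (fun (i : Fin (n - 1 - s)) (j : Fin (s + 1)) =>
      if h : j.1 < s then
        M ⟨s + i.1, by have := i.2; omega⟩ ⟨j.1, by omega⟩
      else
        M ⟨s + i.1, by have := i.2; omega⟩ ⟨n - 1, by omega⟩) with hN
  set r : Fin (n - 1 - s) → Fin n := fun i => ⟨s + i.1, by have := i.2; omega⟩ with hr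
  set c : Fin (s + 1) → Fin n := fun j =>
    if h : j.1 < s then (⟨j.1, by omega⟩ : Fin n) else ⟨n - 1, by omega⟩ with hc
  set d : Fin n → K := fun k => if s ≤ k.1 ∧ k.1 < n - 1 then 1 else 0 with hd
  set D : Matrix (Fin n) (Fin n) K := Matrix.diagonal d with hD
  set P : Matrix (Fin (n - 1 - s)) (Fin n) K := fun i k => if k = r i then 1 else 0 with hP
  set Q : Matrix (Fin n) (Fin (s + 1)) K := fun k j => if k = c j then 1 else 0 with hQ
  have hdr : ∀ i, d (r i) = 1 := by
    intro i; simp only [hd, hr]; rw [if_pos]; exact ⟨by omega, by have := i.2; omega⟩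
  have hdc : ∀ j, d (c j) = 0 := by
    intro j; simp only [hd, hc]
    by_cases h : j.1 < s <;> simp [h] <;> omega
  -- N = P * M * Q
  have hPMQ : ∀ (X : Matrix (Fin n) (Fin n) K), P * X * Q = fun i j => X (r i) (c j) := by
    intro X
    funext i j
    simp only [Matrix.mul_apply]
    simp [Matrix.mul_apply, hP, hQ, ite_mul, mul_ite, Finset.sum_ite_eq']
  have hNPQ : N = P * M * Q := by
    rw [hPMQ]
    funext i j
    simp only [hN, hc, Matrix.of_apply]
    by_cases h : j.1 < s <;> simp [h] <;> rfl
  -- P * D = P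
  have hPD : P * D = P := by
    funext i k
    rw [hD, Matrix.mul_diagonal]
    by_cases h : k = r i
    · subst h; rw [hdr]; ring
    · simp [hP, h]
  -- D * M * D = 0
  have hDMD : D * M * D = 0 := by
    funext i j
    rw [Matrix.mul_diagonal, hD, Matrix.diagonal_mul]
    by_cases hi : s ≤ i.1 ∧ i.1 < n - 1
    · by_cases hj : s ≤ j.1 ∧ j.1 < n - 1
      · rw [hmid M hM i j hi.1 hi.2 hj.1 hj.2]; simp
      · simp only [hd, if_neg hj]; simp
    · simp only [hd, if_neg hi]; simp
  -- rank N ≤ rank (D * M)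
  have h1 : N.rank ≤ (D * M).rank := by
    have : P * (D * M) * Q = N := by
      rw [← Matrix.mul_assoc P D M, hPD, ← hNPQ]
    rw [← this]
    calc (P * (D * M) * Q).rank ≤ (P * (D * M)).rank := Matrix.rank_mul_le_left _ _
      _ ≤ (D * M).rank := Matrix.rank_mul_le_right _ _
  -- rank N ≤ rank (M * D)
  have h2 : N.rank ≤ (M * D).rank := by
    have hDP : D * Pᵀ = Pᵀ := by
      have h' := congrArg Matrix.transpose hPD
      rwa [Matrix.transpose_mul, hD, Matrix.diagonal_transpose, ← hD] at h'
    have hT : Nᵀ = (-Qᵀ) * (M * D) * Pᵀ := by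
      rw [hNPQ, Matrix.transpose_mul, Matrix.transpose_mul, (hAlt M hM).1]
      simp [Matrix.mul_assoc, hDP, neg_mul, mul_neg]
    calc N.rank = Nᵀ.rank := (Matrix.rank_transpose N).symm
      _ = ((-Qᵀ) * (M * D) * Pᵀ).rank := by rw [hT]
      _ ≤ ((-Qᵀ) * (M * D)).rank := Matrix.rank_mul_le_left _ _
      _ ≤ (M * D).rank := Matrix.rank_mul_le_right _ _
  have hkey := key_rank M D hDMD
  have := hrk M hM
  omega
end
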